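/- (Inequality (i) in the proof of the Bernstein-surrogate lemma.) Let u, λ ∈ [0,1] and ζ ≥ 0. If |u − λ| ≤ √(2·λ·(1−λ)·ζ) + ζ/3, then √(λ·(1−λ)) ≤ √(u·(1−u)) + 2.4·√ζ. -/

import Mathlib

/-- Inequality (i) in the proof of the Bernstein-surrogate lemma. -/
theorem bernstein_surrogate_ineq_i
    (u lam ζ : ℝ)
    (hu : u ∈ Set.Icc (0:ℝ) 1) (hlam : lam ∈ Set.Icc (0:ℝ) 1) (hζ : 0 ≤ ζ)
    (h : |u - lam| ≤ Real.sqrt (2 * lam * (1 - lam) * ζ) + ζ / 3) :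
    Real.sqrt (lam * (1 - lam)) ≤ Real.sqrt (u * (1 - u)) + 2.4 * Real.sqrt ζ := by
  obtain ⟨hu0, hu1⟩ := hu
  obtain ⟨hl0, hl1⟩ := hlam
  set a := Real.sqrt (lam * (1 - lam)) with ha_def
  set b := Real.sqrt (u * (1 - u)) with hb_def
  set s := Real.sqrt ζ with hs_def
  have ha0 : 0 ≤ a := Real.sqrt_nonneg _
  have hb0 : 0 ≤ b := Real.sqrt_nonneg _
  have hs0 : 0 ≤ s := Real.sqrt_nonneg _
  have hll : (0:ℝ) ≤ lam * (1 - lam) := by nlinarith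
  have huu : (0:ℝ) ≤ u * (1 - u) := by nlinarith
  have ha2 : a ^ 2 = lam * (1 - lam) := Real.sq_sqrt hll
  have hb2 : b ^ 2 = u * (1 - u) := Real.sq_sqrt huu
  have hs2 : s ^ 2 = ζ := Real.sq_sqrt hζ
  have hsqrt2 : Real.sqrt 2 ≤ 1.5 := by
    rw [show (1.5:ℝ) = Real.sqrt (1.5 ^ 2) from (Real.sqrt_sq (by norm_num)).symm]
    exact Real.sqrt_le_sqrt (by norm_num)
  have heq : Real.sqrt (2 * lam * (1 - lam) * ζ) = Real.sqrt 2 * a * s := by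
    rw [show 2 * lam * (1 - lam) * ζ = 2 * ((lam * (1 - lam)) * ζ) by ring,
      Real.sqrt_mul (by norm_num), Real.sqrt_mul hll, mul_assoc]
  have hle : Real.sqrt (2 * lam * (1 - lam) * ζ) ≤ 1.5 * a * s := by
    rw [heq]
    have : Real.sqrt 2 * a ≤ 1.5 * a := mul_le_mul_of_nonneg_right hsqrt2 ha0
    exact mul_le_mul_of_nonneg_right this hs0
  have h1 : lam * (1 - lam) ≤ u * (1 - u) + |u - lam| := by
    rcases abs_cases (u - lam) with ⟨he, _⟩ | ⟨he, _⟩ <;> nlinarith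
  have hkey : a ^ 2 ≤ b ^ 2 + 1.5 * a * s + s ^ 2 / 3 := by
    rw [ha2, hb2, hs2]
    calc lam * (1 - lam) ≤ u * (1 - u) + |u - lam| := h1
      _ ≤ u * (1 - u) + (1.5 * a * s + ζ / 3) := by
          have := h.trans (add_le_add hle le_rfl)
          linarith
      _ = u * (1 - u) + 1.5 * a * s + ζ / 3 := by ring
  nlinarith [sq_nonneg (a - b - 2.4 * s), sq_nonneg (a - 0.75 * s - b),
    mul_nonneg hb0 hs0, mul_nonneg ha0 hs0, mul_nonneg hb0 ha0]
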